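/- Let m be a positive integer, R a commutative ring in which the image of m is invertible, and ζ ∈ R an element at which the m-th cyclotomic polynomial with integer coefficients evaluates to zero. Then for every integer d with 0 < d < m, the element 1 − ζ^d is a unit of R. -/

import Mathlib

open Polynomial

/-- If `m` is invertible in `R` and `ζ` is a root of the `m`-th cyclotomic polynomial over `ℤ`,
then `1 − ζ^d` is a unit for every `0 < d < m`. -/
theorem one_sub_pow_isUnit_of_cyclotomic_root
    {R : Type*} [CommRing R] (m : ℕ) (hm : 0 < m) (hu : IsUnit (m : R)) (ζ : R)
    (hζ : Polynomial.aeval ζ (Polynomial.cyclotomic m ℤ) = 0)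
    (d : ℕ) (hd0 : 0 < d) (hdm : d < m) :
    IsUnit (1 - ζ ^ d) := by
  set Q : Polynomial ℤ := ∏ i ∈ m.properDivisors, cyclotomic i ℤ with hQ
  have hfact : (X ^ m - 1 : Polynomial ℤ) = cyclotomic m ℤ * Q := by
    rw [← prod_cyclotomic_eq_X_pow_sub_one hm ℤ,
      ← Nat.insert_self_properDivisors hm.ne',
      Finset.prod_insert Nat.self_notMem_properDivisors]
  -- ζ^m = 1
  have hζm : ζ ^ m = 1 := by
    have h := congrArg (aeval ζ) hfact
    simp only [map_sub, map_pow, map_one, map_mul, aeval_X, hζ, zero_mul] at h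
    exact sub_eq_zero.mp h
  -- ζ is a unit
  have hζu : IsUnit ζ := by
    apply IsUnit.of_mul_eq_one (a := ζ) (ζ ^ (m - 1))
    rw [← pow_succ', Nat.sub_add_cancel hm, hζm]
  -- derivative argument: aeval ζ Q is a unit
  have hder : (m : R) * ζ ^ (m - 1) =
      aeval ζ (derivative (cyclotomic m ℤ)) * aeval ζ Q := by
    have h := congrArg (fun p => aeval ζ (derivative p)) hfact
    simp only [derivative_sub, derivative_one, derivative_X_pow, derivative_mul,
      sub_zero, map_add, map_mul, map_pow, aeval_X, aeval_C, hζ, zero_mul, add_zero] at h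
    simpa using h
  have hQu : IsUnit (aeval ζ Q) := by
    have hlu : IsUnit ((m : R) * ζ ^ (m - 1)) := hu.mul (hζu.pow _)
    rw [hder] at hlu
    exact isUnit_of_mul_isUnit_right hlu
  -- each cyclotomic value at a proper divisor is a unit
  have hcyc : ∀ i ∈ m.properDivisors, IsUnit (aeval ζ (cyclotomic i ℤ)) := by
    intro i hi
    refine isUnit_of_dvd_unit ?_ hQu
    rw [hQ, map_prod]
    exact Finset.dvd_prod_of_mem _ hi
  -- e = gcd d m, show 1 - ζ^e is a unit
  set e : ℕ := Nat.gcd d m with he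
  have he0 : 0 < e := Nat.gcd_pos_of_pos_left m hd0
  have hedvd : e ∣ m := Nat.gcd_dvd_right d m
  have hed : e ∣ d := Nat.gcd_dvd_left d m
  have hem : e < m := lt_of_le_of_lt (Nat.le_of_dvd hd0 hed) hdm
  have hζe : IsUnit (1 - ζ ^ e) := by
    have hfe : (X ^ e - 1 : Polynomial ℤ) = ∏ i ∈ e.divisors, cyclotomic i ℤ :=
      (prod_cyclotomic_eq_X_pow_sub_one he0 ℤ).symm
    have h := congrArg (aeval ζ) hfe
    simp only [map_sub, map_pow, map_one, aeval_X, map_prod] at h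
    have hprod : IsUnit (∏ i ∈ e.divisors, aeval ζ (cyclotomic i ℤ)) := by
      refine Finset.prod_induction _ IsUnit (fun a b ha hb => ha.mul hb) isUnit_one
        (fun i hi => ?_)
      apply hcyc
      rw [Nat.mem_properDivisors]
      obtain ⟨hie, _⟩ := Nat.mem_divisors.mp hi
      exact ⟨hie.trans hedvd, lt_of_le_of_lt (Nat.le_of_dvd he0 hie) hem⟩
    rw [← h] at hprod
    simpa using hprod.neg
  -- get k t with d * k = e + m * t, k > 0
  obtain ⟨k, t, hk0, hkt⟩ : ∃ k t : ℕ, 0 < k ∧ d * k = e + m * t := by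
    have hbez : (e : ℤ) = d * Nat.gcdA d m + m * Nat.gcdB d m := Nat.gcd_eq_gcd_ab d m
    set x := Nat.gcdA d m
    set y := Nat.gcdB d m
    set s : ℤ := |x| + |y| + 1 with hs
    have hx : 0 < x + m * s := by
      have : (1 : ℤ) ≤ m := by exact_mod_cast hm
      nlinarith [abs_nonneg x, abs_nonneg y, neg_abs_le x, le_abs_self x]
    have hy : 0 ≤ d * s - y := by
      have : (1 : ℤ) ≤ d := by exact_mod_cast hd0
      nlinarith [abs_nonneg x, abs_nonneg y, le_abs_self y]
    refine ⟨(x + m * s).toNat, (d * s - y).toNat, ?_, ?_⟩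
    · omega
    · have : (d : ℤ) * (x + m * s) = e + m * (d * s - y) := by ring_nf; linarith [hbez]
      have h2 : (d : ℤ) * ((x + m * s).toNat : ℤ) = e + m * ((d * s - y).toNat : ℤ) := by
        rw [Int.toNat_of_nonneg hx.le, Int.toNat_of_nonneg hy]; exact this
      exact_mod_cast h2
  -- ζ^(d*k) = ζ^e
  have hpow : (ζ ^ d) ^ k = ζ ^ e := by
    rw [← pow_mul, hkt, pow_add, pow_mul, hζm, one_pow, mul_one]
  -- (1 - ζ^d) ∣ (1 - ζ^e)
  have hdvd : (1 - ζ ^ d) ∣ (1 - ζ ^ e) := by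
    rw [← hpow]
    simpa using sub_dvd_pow_sub_pow 1 (ζ ^ d) k
  exact isUnit_of_dvd_unit hdvd hζe
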